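/- arXiv:2302.04339 — 2 statements merged into one kernel-verified Lean document; each statement's English description precedes it below -/
import Mathlib

section
/- Let p, q be complex univariate polynomials and suppose there exists z₀ ∈ ℂ with q(z₀) = 0 and p(z₀) ≠ 0 (or vice versa). Then the bivariate polynomials P(z,w) = p(z)·q*(w) − 1 and Q(z,w) = p*(w)·q(z) − 1 are coprime in ℂ[z,w]. -/
open Polynomial Complex

private lemma key_lemma (p q : Polynomial ℂ) (z₀ : ℂ) (hq : q.eval z₀ = 0)
    (hp : p.eval z₀ ≠ 0) :
    IsRelPrime
      (p.map (Polynomial.C : ℂ →+* Polynomial ℂ) *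
        Polynomial.C (q.map (starRingEnd ℂ)) - 1)
      (q.map (Polynomial.C : ℂ →+* Polynomial ℂ) *
        Polynomial.C (p.map (starRingEnd ℂ)) - 1) := by
  by_cases hq0 : q = 0
  · intro d _ hdQ
    subst hq0
    simp only [Polynomial.map_zero, zero_mul, zero_sub] at hdQ
    exact isUnit_of_dvd_unit hdQ ((isUnit_one (M := Polynomial (Polynomial ℂ))).neg)
  intro d hdP hdQ
  obtain ⟨e₁, he₁⟩ := hdP
  obtain ⟨e₂, he₂⟩ := hdQ
  set β₀ : ℂ := (starRingEnd ℂ) z₀ with hβ₀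
  set ψ : Polynomial (Polynomial ℂ) →+* Polynomial ℂ :=
    Polynomial.mapRingHom (Polynomial.evalRingHom β₀) with hψdef
  have hcomp : (Polynomial.evalRingHom β₀).comp (Polynomial.C : ℂ →+* Polynomial ℂ)
      = RingHom.id ℂ := by ext x; simp
  have hψp : ψ (p.map Polynomial.C) = p := by
    simp [hψdef, Polynomial.map_map, hcomp]
  have hψq : ψ (q.map Polynomial.C) = q := by
    simp [hψdef, Polynomial.map_map, hcomp]
  have hqev : (q.map (starRingEnd ℂ)).eval β₀ = 0 := by
    rw [hβ₀, Polynomial.eval_map, Polynomial.eval₂_at_apply, hq, map_zero]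
  have hpev : (p.map (starRingEnd ℂ)).eval β₀ ≠ 0 := by
    rw [hβ₀, Polynomial.eval_map, Polynomial.eval₂_at_apply]
    simpa using hp
  have hψP : ψ (p.map Polynomial.C * Polynomial.C (q.map (starRingEnd ℂ)) - 1) = -1 := by
    simp [hψdef, Polynomial.coe_mapRingHom, hψp, hqev]
  set c : ℂ := (p.map (starRingEnd ℂ)).eval β₀ with hc
  -- ψ d is a unit
  have hψd : IsUnit (ψ d) := by
    have h1 : (-1 : Polynomial ℂ) = ψ d * ψ e₁ := by rw [← map_mul, ← he₁, hψP]
    exact isUnit_of_mul_isUnit_left (by rw [← h1]; exact isUnit_one.neg)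
  have hψd0 : (ψ d).natDegree = 0 := Polynomial.natDegree_eq_zero_of_isUnit hψd
  -- deg q ≥ 1
  have hq1 : 1 ≤ q.natDegree := by
    by_contra hlt
    push_neg at hlt
    obtain ⟨a, ha⟩ := Polynomial.natDegree_eq_zero.mp (Nat.lt_one_iff.mp hlt)
    rw [← ha] at hq hq0
    simp only [Polynomial.eval_C] at hq
    exact hq0 (by rw [hq, map_zero])
  -- ψ Q = q * C c - 1
  have hψQ : ψ (q.map Polynomial.C * Polynomial.C (p.map (starRingEnd ℂ)) - 1)
      = q * Polynomial.C c - 1 := by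
    rw [map_sub, map_one, map_mul, hψq, hψdef]
    simp [Polynomial.coe_mapRingHom, hc]
  -- natDegree of ψ Q is deg q
  have hdegψQ : (q * Polynomial.C c - 1).natDegree = q.natDegree := by
    have h2 : (q * Polynomial.C c).natDegree = q.natDegree := by
      rw [Polynomial.natDegree_mul hq0 (by simpa using hpev), Polynomial.natDegree_C, add_zero]
    rw [Polynomial.natDegree_sub_eq_left_of_natDegree_lt]
    · exact h2
    · rw [h2, Polynomial.natDegree_one]; omega
  -- Q ≠ 0
  have hQ0 : q.map Polynomial.C * Polynomial.C (p.map (starRingEnd ℂ)) - 1 ≠ 0 := by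
    intro h0
    rw [h0, map_zero] at hψQ
    rw [← hψQ] at hdegψQ
    simp at hdegψQ
    omega
  have hd0 : d ≠ 0 := fun h0 => hQ0 (by rw [he₂, h0, zero_mul])
  have he₂0 : e₂ ≠ 0 := fun h0 => hQ0 (by rw [he₂, h0, mul_zero])
  -- chain of degree inequalities
  have hchain : q.natDegree ≤ e₂.natDegree := by
    calc q.natDegree = (ψ d * ψ e₂).natDegree := by
          rw [← map_mul, ← he₂, hψQ, hdegψQ]
      _ ≤ (ψ d).natDegree + (ψ e₂).natDegree := Polynomial.natDegree_mul_le
      _ = (ψ e₂).natDegree := by rw [hψd0, zero_add]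
      _ ≤ e₂.natDegree := by rw [hψdef]; exact Polynomial.natDegree_map_le
  have hQle : (q.map Polynomial.C * Polynomial.C (p.map (starRingEnd ℂ)) - 1).natDegree
      ≤ q.natDegree := by
    refine le_trans (Polynomial.natDegree_sub_le _ _) ?_
    simp only [Polynomial.natDegree_one, max_le_iff]
    constructor
    · refine le_trans Polynomial.natDegree_mul_le ?_
      simp only [Polynomial.natDegree_C, add_zero]
      exact Polynomial.natDegree_map_le
    · omega
  have hdd : d.natDegree = 0 := by
    have := Polynomial.natDegree_mul hd0 he₂0
    rw [← he₂] at this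
    omega
  -- d = C a, evaluate Q at z = C z₀
  obtain ⟨a, ha⟩ := Polynomial.natDegree_eq_zero.mp hdd
  have hev : ((q.map Polynomial.C * Polynomial.C (p.map (starRingEnd ℂ)) - 1).eval
      (Polynomial.C z₀)) = -1 := by
    rw [Polynomial.eval_sub, Polynomial.eval_mul, Polynomial.eval_C, Polynomial.eval_one,
      Polynomial.eval_map, Polynomial.eval₂_at_apply, hq, map_zero, zero_mul, zero_sub]
  rw [he₂, ← ha] at hev
  rw [Polynomial.eval_mul, Polynomial.eval_C] at hev
  have : IsUnit a := isUnit_of_mul_isUnit_left (hev ▸ isUnit_one.neg)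
  rw [← ha]
  exact Polynomial.isUnit_C.mpr this

/-- If the zero sets of `p` and `q` differ (there is a point where one vanishes but not
the other), then `P(z,w) = p(z)·q*(w) − 1` and `Q(z,w) = p*(w)·q(z) − 1` are coprime
in `ℂ[z,w]` (represented as `(ℂ[w])[z]`). -/
theorem stmt_3 (p q : Polynomial ℂ)
    (h : (∃ z₀ : ℂ, q.eval z₀ = 0 ∧ p.eval z₀ ≠ 0) ∨
         (∃ z₀ : ℂ, p.eval z₀ = 0 ∧ q.eval z₀ ≠ 0)) :
    IsRelPrime
      (p.map (Polynomial.C : ℂ →+* Polynomial ℂ) *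
        Polynomial.C (q.map (starRingEnd ℂ)) - 1)
      (q.map (Polynomial.C : ℂ →+* Polynomial ℂ) *
        Polynomial.C (p.map (starRingEnd ℂ)) - 1) := by
  rcases h with ⟨z₀, hq, hp⟩ | ⟨z₀, hp, hq⟩
  · exact key_lemma p q z₀ hq hp
  · exact (key_lemma q p z₀ hp hq).symm
end

section
/- Let P(z, z̄) = Σ_{k=0}^m p_k(z) z̄^k be a polyanalytic polynomial with deg p_k ≤ n for all k and p_m ≠ 0, and let Q(z,w) = conj-reflected polynomial satisfying Q(z, z̄) = conj(P(z, z̄)) for all z. If P(z,w) and Q(z,w) are coprime as bivariate polynomials, then the number of z ∈ ℂ with P(z, conj z) = 0 is at most n² + m². -/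
open Polynomial Complex

/-- Evaluation of a polyanalytic-type bivariate polynomial
`P = Σ_k p_k(z) w^k ∈ (ℂ[z])[w]` at the point `(z₀, w₀)`. -/
noncomputable def biEvalZW (P : Polynomial (Polynomial ℂ)) (z₀ w₀ : ℂ) : ℂ :=
  (P.map (Polynomial.evalRingHom z₀)).eval w₀

open Matrix

variable {R : Type*} [CommRing R]

/-- Sylvester-type matrix of `p, q : R[X]` with formal degrees `dp, dq`. -/
noncomputable def sylv (p q : R[X]) (dp dq : ℕ) :
    Matrix (Fin dq ⊕ Fin dp) (Fin dq ⊕ Fin dp) R := fun i j =>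
  Sum.elim (fun i' : Fin dq => (p * X ^ (i' : ℕ)).coeff (finSumFinEquiv j : Fin (dq + dp)))
           (fun i' : Fin dp => (q * X ^ (i' : ℕ)).coeff (finSumFinEquiv j)) i

lemma sylv_map {S : Type*} [CommRing S] (f : R →+* S) (p q : R[X]) (dp dq : ℕ) :
    (sylv p q dp dq).map f = sylv (p.map f) (q.map f) dp dq := by
  ext i j
  cases i <;> simp [sylv, Matrix.map_apply, ← coeff_map, Polynomial.map_mul,
    Polynomial.map_pow, Polynomial.map_X]

/-- If `p` and `q` have a common root, the Sylvester determinant vanishes. -/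
lemma sylv_det_eq_zero {K : Type*} [Field K] {p q : K[X]} {dp dq : ℕ}
    (hp : p.natDegree ≤ dp) (hq : q.natDegree ≤ dq) (hpos : 0 < dq + dp)
    {w₀ : K} (hw : p.eval w₀ = 0) (hw' : q.eval w₀ = 0) :
    (sylv p q dp dq).det = 0 := by
  rw [← Matrix.exists_mulVec_eq_zero_iff]
  refine ⟨fun j => w₀ ^ (finSumFinEquiv j : ℕ), ?_, ?_⟩
  · intro h
    have := congrFun h (finSumFinEquiv.symm ⟨0, hpos⟩)
    simp at this
  · funext i
    have key : ∀ (r : K[X]), r.natDegree < dq + dp →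
        ∑ j : Fin dq ⊕ Fin dp, r.coeff ((finSumFinEquiv j : Fin (dq+dp)) : ℕ) *
          w₀ ^ ((finSumFinEquiv j : Fin (dq+dp)) : ℕ) = r.eval w₀ := by
      intro r hr
      have h1 : ∑ j : Fin dq ⊕ Fin dp, r.coeff ((finSumFinEquiv j : Fin (dq+dp)) : ℕ) *
          w₀ ^ ((finSumFinEquiv j : Fin (dq+dp)) : ℕ)
          = ∑ k : Fin (dq+dp), r.coeff (k : ℕ) * w₀ ^ (k : ℕ) :=
        Fintype.sum_bijective (⇑finSumFinEquiv) finSumFinEquiv.bijective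
          (fun j : Fin dq ⊕ Fin dp => r.coeff ((finSumFinEquiv j : Fin (dq+dp)) : ℕ) *
            w₀ ^ ((finSumFinEquiv j : Fin (dq+dp)) : ℕ))
          (fun k : Fin (dq+dp) => r.coeff (k : ℕ) * w₀ ^ (k : ℕ)) (fun j => rfl)
      refine h1.trans ?_
      rw [eval_eq_sum_range' hr]
      exact Fin.sum_univ_eq_sum_range (fun k => r.coeff k * w₀ ^ k) (dq+dp)
    simp only [Matrix.mulVec, dotProduct, Pi.zero_apply]
    cases i with
    | inl i =>
      have h1 : (p * X ^ (i:ℕ)).natDegree ≤ p.natDegree + (i:ℕ) :=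
        le_trans natDegree_mul_le (by simp)
      have hd : (p * X ^ (i:ℕ)).natDegree < dq + dp := by
        have h2 := i.isLt; omega
      simp only [sylv, Sum.elim_inl]
      rw [key _ hd]
      simp [hw]
    | inr i =>
      have h1 : (q * X ^ (i:ℕ)).natDegree ≤ q.natDegree + (i:ℕ) :=
        le_trans natDegree_mul_le (by simp)
      have hd : (q * X ^ (i:ℕ)).natDegree < dq + dp := by
        have h2 := i.isLt; omega
      simp only [sylv, Sum.elim_inr]
      rw [key _ hd]
      simp [hw']

lemma coeff_sum_CX {S : Type*} [CommRing S] {d : ℕ} (f : Fin d → S) (j : Fin d) :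
    (∑ i : Fin d, C (f i) * X ^ (i : ℕ)).coeff (j : ℕ) = f j := by
  rw [finset_sum_coeff, Finset.sum_eq_single j]
  · simp
  · intro i _ hij
    have : (i : ℕ) ≠ (j : ℕ) := fun h => hij (Fin.val_injective h)
    simp [coeff_C_mul, coeff_X_pow, this, Ne.symm this]
  · simp

/-- If `p, q` are coprime over a UFD, the Sylvester determinant is nonzero. -/
lemma sylv_det_ne_zero {A : Type*} [CommRing A] [IsDomain A] [UniqueFactorizationMonoid A]
    {p q : A[X]} (hp : p ≠ 0) {dq : ℕ} (hq : q.natDegree ≤ dq)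
    (hcop : IsRelPrime p q) : (sylv p q p.natDegree dq).det ≠ 0 := by
  set dp := p.natDegree with hdp
  intro h0
  obtain ⟨c, hc, hcm⟩ := (Matrix.exists_vecMul_eq_zero_iff).mpr h0
  set a : A[X] := ∑ i : Fin dq, C (c (Sum.inl i)) * X ^ (i : ℕ) with ha
  set b : A[X] := ∑ i : Fin dp, C (c (Sum.inr i)) * X ^ (i : ℕ) with hb
  have hab : a * p + b * q = 0 := by
    apply Polynomial.ext
    intro k
    have expand : ∀ (r : A[X]) (g : Fin dq ⊕ Fin dp → A) (d : ℕ)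
        (emb : Fin d → Fin dq ⊕ Fin dp),
        (∑ i : Fin d, C (g (emb i)) * X ^ (i : ℕ)) * r
        = ∑ i : Fin d, C (g (emb i)) * (r * X ^ (i : ℕ)) := by
      intro r g d emb
      rw [Finset.sum_mul]
      exact Finset.sum_congr rfl fun i _ => by ring
    rw [coeff_add, coeff_zero, ha, hb, expand p c dq Sum.inl, expand q c dp Sum.inr,
      finset_sum_coeff, finset_sum_coeff]
    simp only [coeff_C_mul]
    by_cases hk : k < dq + dp
    · have hj : ((finSumFinEquiv.symm ⟨k, hk⟩ : Fin dq ⊕ Fin dp)) ∈ (Finset.univ : Finset _) :=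
        Finset.mem_univ _
      have := congrFun hcm (finSumFinEquiv.symm ⟨k, hk⟩)
      rw [Matrix.vecMul, Pi.zero_apply] at this
      rw [show (dotProduct c fun i => sylv p q dp dq i (finSumFinEquiv.symm ⟨k, hk⟩)) =
        ∑ i, c i * sylv p q dp dq i (finSumFinEquiv.symm ⟨k, hk⟩) from rfl] at this
      rw [Fintype.sum_sum_type] at this
      have hme : ∀ (i : Fin dq ⊕ Fin dp), sylv p q dp dq i (finSumFinEquiv.symm ⟨k, hk⟩)
          = Sum.elim (fun i' : Fin dq => (p * X ^ (i' : ℕ)).coeff k)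
            (fun i' : Fin dp => (q * X ^ (i' : ℕ)).coeff k) i := by
        intro i
        cases i <;> simp [sylv]
      simp only [hme, Sum.elim_inl, Sum.elim_inr] at this
      exact this
    · push_neg at hk
      have z1 : ∀ i : Fin dq, (p * X ^ (i : ℕ)).coeff k = 0 := by
        intro i
        apply coeff_eq_zero_of_natDegree_lt
        have h1 : (p * X ^ (i : ℕ)).natDegree ≤ dp + (i : ℕ) :=
          le_trans natDegree_mul_le (by simp [hdp])
        have := i.isLt; omega
      have z2 : ∀ i : Fin dp, (q * X ^ (i : ℕ)).coeff k = 0 := by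
        intro i
        apply coeff_eq_zero_of_natDegree_lt
        have h1 : (q * X ^ (i : ℕ)).natDegree ≤ q.natDegree + (i : ℕ) :=
          le_trans natDegree_mul_le (by simp)
        have := i.isLt; omega
      simp [z1, z2]
  have hpb : p ∣ b := by
    refine hcop.dvd_of_dvd_mul_right ⟨-a, ?_⟩
    linear_combination hab
  have hb0 : b = 0 := by
    rcases Nat.eq_zero_or_pos dp with h | h
    · rw [hb]
      have : (Finset.univ : Finset (Fin dp)) = ∅ := by
        rw [h] at *
        exact Finset.univ_eq_empty
      rw [this, Finset.sum_empty]
    · by_contra hbne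
      have h1 : dp ≤ b.natDegree := natDegree_le_of_dvd hpb hbne
      have h2 : b.natDegree ≤ dp - 1 := by
        refine natDegree_sum_le_of_forall_le _ _ fun i _ => ?_
        refine le_trans (natDegree_C_mul_X_pow_le _ _) ?_
        have := i.isLt; omega
      omega
  have ha0 : a = 0 := by
    rw [hb0, zero_mul, add_zero, mul_eq_zero] at hab
    exact hab.resolve_right hp
  apply hc
  funext i
  cases i with
  | inl i => have := coeff_sum_CX (fun i : Fin dq => c (Sum.inl i)) i
             rw [← ha, ha0] at this; simpa using this.symm
  | inr i => have := coeff_sum_CX (fun i : Fin dp => c (Sum.inr i)) i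
             rw [← hb, hb0] at this; simpa using this.symm

/-- Degree bound for the Sylvester determinant of bivariate polynomials. -/
lemma sylv_det_natDegree_le {S : Type*} [CommRing S] (P Q : Polynomial (Polynomial S))
    (dp dq n m' : ℕ) (hP : ∀ k, (P.coeff k).natDegree ≤ n)
    (hQ : ∀ k, (Q.coeff k).natDegree ≤ m') :
    (sylv P Q dp dq).det.natDegree ≤ dq * n + dp * m' := by
  rw [Matrix.det_apply]
  refine natDegree_sum_le_of_forall_le _ _ fun σ _ => ?_
  have h1 : (Equiv.Perm.sign σ • ∏ i, sylv P Q dp dq (σ i) i)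
      = ((Equiv.Perm.sign σ : ℤ) : Polynomial S) * ∏ i, sylv P Q dp dq (σ i) i := by
    rw [Units.smul_def, zsmul_eq_mul]
  rw [h1]
  refine le_trans natDegree_mul_le ?_
  rw [natDegree_intCast, zero_add]
  refine le_trans (natDegree_prod_le _ _) ?_
  have hterm : ∀ i : Fin dq ⊕ Fin dp, (sylv P Q dp dq (σ i) i).natDegree ≤
      Sum.elim (fun _ : Fin dq => n) (fun _ : Fin dp => m') (σ i) := by
    intro i
    rcases hσ : σ i with i' | i'
    · simp only [sylv, Sum.elim_inl, coeff_mul_X_pow']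
      split
      · exact hP _
      · simp
    · simp only [sylv, Sum.elim_inr, coeff_mul_X_pow']
      split
      · exact hQ _
      · simp
  calc ∑ i, (sylv P Q dp dq (σ i) i).natDegree
      ≤ ∑ i, Sum.elim (fun _ : Fin dq => n) (fun _ : Fin dp => m') (σ i) :=
        Finset.sum_le_sum fun i _ => hterm i
    _ = ∑ i, Sum.elim (fun _ : Fin dq => n) (fun _ : Fin dp => m') i :=
        Equiv.sum_comp σ _
    _ = dq * n + dp * m' := by
      simp [Fintype.sum_sum_type, Finset.sum_const, Finset.card_univ, mul_comm]

open Complex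

noncomputable def biHom (z₀ w₀ : ℂ) : Polynomial (Polynomial ℂ) →+* ℂ :=
  (evalRingHom w₀).comp (mapRingHom (evalRingHom z₀))

noncomputable def psiIn : Polynomial ℂ →+* Polynomial (Polynomial ℂ) :=
  eval₂RingHom (C.comp C) (C X + C (C I) * X)

noncomputable def PhiH : Polynomial (Polynomial ℂ) →+* Polynomial (Polynomial ℂ) :=
  eval₂RingHom psiIn (C X - C (C I) * X)

noncomputable def chiIn : Polynomial ℂ →+* Polynomial (Polynomial ℂ) :=
  eval₂RingHom (C.comp C) (C (C (2⁻¹ : ℂ)) * (C X + X))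

noncomputable def PsiH : Polynomial (Polynomial ℂ) →+* Polynomial (Polynomial ℂ) :=
  eval₂RingHom chiIn (C (C (-I/2)) * (C X - X))

lemma hI2 : (I : ℂ) * (-I/2) = 2⁻¹ := by
  linear_combination (-(1:ℂ)/2) * Complex.I_sq

lemma h2inv : (C (C (2⁻¹ : ℂ)) : Polynomial (Polynomial ℂ)) * 2 = 1 := by
  rw [show (2 : Polynomial (Polynomial ℂ)) = C (C 2) from by rw [show ((2:ℂ)) = ((2:ℕ):ℂ) from by norm_num, C_eq_natCast, C_eq_natCast]; norm_num, ← C_mul, ← C_mul]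
  norm_num

lemma hPsiPhi : PsiH.comp PhiH = RingHom.id (Polynomial (Polynomial ℂ)) := by
  apply Polynomial.ringHom_ext
  · intro a
    have hcomp : (PsiH.comp PhiH).comp (C : Polynomial ℂ →+* Polynomial (Polynomial ℂ))
        = (C : Polynomial ℂ →+* Polynomial (Polynomial ℂ)) := by
      apply Polynomial.ringHom_ext
      · intro c
        simp [PsiH, PhiH, psiIn, chiIn, eval₂_C, coe_eval₂RingHom]
      · simp only [RingHom.comp_apply, PsiH, PhiH, psiIn, chiIn, coe_eval₂RingHom,
          eval₂_C, eval₂_X, eval₂_add, eval₂_mul, RingHom.coe_comp, Function.comp_apply,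
          RingHom.id_apply, map_add, _root_.map_mul]
        rw [show ((C (C I) : Polynomial (Polynomial ℂ)) * (C (C (-I/2)) * (C X - X)))
          = C (C I) * C (C (-I/2)) * (C X - X) from by ring, ← C_mul, ← C_mul, hI2]
        linear_combination (C X : Polynomial (Polynomial ℂ)) * h2inv
    exact RingHom.congr_fun hcomp a
  · simp only [RingHom.comp_apply, PsiH, PhiH, psiIn, chiIn, coe_eval₂RingHom,
      eval₂_C, eval₂_X, eval₂_sub, eval₂_mul, RingHom.id_apply, map_sub, _root_.map_mul]
    rw [show ((C (C I) : Polynomial (Polynomial ℂ)) * (C (C (-I/2)) * (C X - X)))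
      = C (C I) * C (C (-I/2)) * (C X - X) from by ring, ← C_mul, ← C_mul, hI2]
    linear_combination (X : Polynomial (Polynomial ℂ)) * h2inv

lemma biHom_C (z₀ w₀ : ℂ) (p : Polynomial ℂ) : biHom z₀ w₀ (C p) = p.eval z₀ := by
  simp [biHom]

lemma biHom_X (z₀ w₀ : ℂ) : biHom z₀ w₀ X = w₀ := by
  simp [biHom]

lemma hEval (s t : ℂ) : (biHom s t).comp PhiH = biHom (s + I*t) (s - I*t) := by
  apply Polynomial.ringHom_ext
  · intro a
    have hcomp : ((biHom s t).comp PhiH).comp (C : Polynomial ℂ →+* _)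
        = (biHom (s + I*t) (s - I*t)).comp (C : Polynomial ℂ →+* _) := by
      apply Polynomial.ringHom_ext
      · intro c
        simp [biHom, PhiH, psiIn, coe_eval₂RingHom, eval₂_C]
      · simp only [RingHom.comp_apply, PhiH, psiIn, coe_eval₂RingHom, eval₂_C, eval₂_X,
          map_add, _root_.map_mul, biHom_C, biHom_X]
        simp [biHom]
    exact RingHom.congr_fun hcomp a
  · simp only [RingHom.comp_apply, PhiH, psiIn, coe_eval₂RingHom, eval₂_X,
      map_sub, _root_.map_mul, biHom_C, biHom_X]
    simp [biHom]

lemma biEvalZW_eq (F : Polynomial (Polynomial ℂ)) (z w : ℂ) :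
    biEvalZW F z w = biHom z w F := rfl

lemma conj_eq (s t : ℝ) : (starRingEnd ℂ) ((s:ℂ) + I*t) = (s:ℂ) - I*t := by
  rw [map_add, _root_.map_mul, Complex.conj_ofReal, Complex.conj_ofReal, Complex.conj_I]
  ring

lemma biEval_inj (F : Polynomial (Polynomial ℂ))
    (h : ∀ z : ℂ, biEvalZW F z (starRingEnd ℂ z) = 0) : F = 0 := by
  have hG : PhiH F = 0 := by
    have hmap : ∀ s : ℝ, (PhiH F).map (evalRingHom (s:ℂ)) = 0 := by
      intro s
      apply eq_zero_of_infinite_isRoot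
      apply Set.Infinite.mono (s := Set.range (fun t : ℝ => (t:ℂ)))
      · rintro _ ⟨t, rfl⟩
        have h1 : ((PhiH F).map (evalRingHom (s:ℂ))).eval (t:ℂ) = biHom s t (PhiH F) := rfl
        show IsRoot _ _
        rw [IsRoot.def, h1, ← RingHom.comp_apply, hEval]
        have h2 := h ((s:ℂ) + I*t)
        rw [biEvalZW_eq, conj_eq] at h2
        exact h2
      · exact Set.infinite_range_of_injective Complex.ofReal_injective
    apply Polynomial.ext
    intro k
    rw [coeff_zero]
    apply eq_zero_of_infinite_isRoot
    apply Set.Infinite.mono (s := Set.range (fun s : ℝ => (s:ℂ)))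
    · rintro _ ⟨s, rfl⟩
      show IsRoot _ _
      rw [IsRoot.def, show ((PhiH F).coeff k).eval (s:ℂ)
        = ((PhiH F).map (evalRingHom (s:ℂ))).coeff k from
          (coeff_map (evalRingHom (s:ℂ)) k (p := PhiH F)).symm,
        hmap s, coeff_zero]
    · exact Set.infinite_range_of_injective Complex.ofReal_injective
  have := RingHom.congr_fun hPsiPhi F
  rw [RingHom.comp_apply, hG, map_zero] at this
  exact this.symm

lemma reflect_spec (P : Polynomial (Polynomial ℂ)) (n m : ℕ)
    (hn : ∀ k : ℕ, (P.coeff k).natDegree ≤ n) (hm : P.natDegree ≤ m) :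
    ∃ Q' : Polynomial (Polynomial ℂ), Q'.natDegree ≤ n ∧ (∀ k, (Q'.coeff k).natDegree ≤ m) ∧
      ∀ z : ℂ, biEvalZW Q' z (starRingEnd ℂ z)
        = starRingEnd ℂ (biEvalZW P z (starRingEnd ℂ z)) := by
  refine ⟨∑ j ∈ Finset.range (n+1), ∑ k ∈ Finset.range (m+1),
    C (C ((starRingEnd ℂ) ((P.coeff k).coeff j)) * X ^ k) * X ^ j, ?_, ?_, ?_⟩
  · refine natDegree_sum_le_of_forall_le _ _ fun j hj => ?_
    refine natDegree_sum_le_of_forall_le _ _ fun k _ => ?_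
    refine le_trans (natDegree_C_mul_X_pow_le _ _) ?_
    exact Nat.lt_succ_iff.mp (Finset.mem_range.mp hj)
  · intro l
    rw [finset_sum_coeff]
    refine natDegree_sum_le_of_forall_le _ _ fun j _ => ?_
    rw [finset_sum_coeff]
    refine natDegree_sum_le_of_forall_le _ _ fun k hk => ?_
    rw [coeff_C_mul, coeff_X_pow]
    split_ifs with hjl
    · rw [mul_one]
      exact le_trans (natDegree_C_mul_X_pow_le _ _) (Nat.lt_succ_iff.mp (Finset.mem_range.mp hk))
    · simp
  · intro z
    set w := starRingEnd ℂ z with hw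
    have hcw : starRingEnd ℂ w = z := Complex.conj_conj z
    have hL : biEvalZW (∑ j ∈ Finset.range (n+1), ∑ k ∈ Finset.range (m+1),
        C (C ((starRingEnd ℂ) ((P.coeff k).coeff j)) * X ^ k) * X ^ j) z w
        = ∑ j ∈ Finset.range (n+1), ∑ k ∈ Finset.range (m+1),
          (starRingEnd ℂ) ((P.coeff k).coeff j) * z ^ k * w ^ j := by
      rw [biEvalZW_eq, map_sum]
      refine Finset.sum_congr rfl fun j _ => ?_
      rw [map_sum]
      refine Finset.sum_congr rfl fun k _ => ?_
      rw [_root_.map_mul, map_pow, biHom_C, biHom_X, eval_mul, eval_pow, eval_C, eval_X]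
    have e1 : biEvalZW P z w = ∑ k ∈ Finset.range (m+1), (P.coeff k).eval z * w ^ k := by
      rw [show biEvalZW P z w = (P.map (evalRingHom z)).eval w from rfl,
        eval_eq_sum_range' (lt_of_le_of_lt (le_trans (natDegree_map_le) hm)
          (Nat.lt_succ_self m))]
      exact Finset.sum_congr rfl fun k _ => by rw [coeff_map, coe_evalRingHom]
    have e2 : ∀ k, (P.coeff k).eval z
        = ∑ j ∈ Finset.range (n+1), (P.coeff k).coeff j * z ^ j := fun k =>
      eval_eq_sum_range' (lt_of_le_of_lt (hn k) (Nat.lt_succ_self n)) z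
    rw [hL, e1, map_sum, Finset.sum_comm]
    refine Finset.sum_congr rfl fun k _ => ?_
    rw [_root_.map_mul, map_pow, hcw, e2 k, map_sum, Finset.sum_mul]
    refine Finset.sum_congr rfl fun j _ => ?_
    rw [_root_.map_mul, map_pow, hw]
    ring

/-- Let `P(z,z̄) = Σ_{k=0}^m p_k(z) z̄^k` be a polyanalytic polynomial with
`deg p_k ≤ n` for all `k` and `p_m ≠ 0`, and let `Q` be a bivariate polynomial with
`Q(z, z̄) = conj (P(z, z̄))` for all `z`.  If `P` and `Q` are coprime as bivariate
polynomials, then `P(z, z̄)` has at most `n² + m²` zeros. -/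
theorem stmt_7 (P Q : Polynomial (Polynomial ℂ)) (n m : ℕ)
    (hn : ∀ k : ℕ, (P.coeff k).natDegree ≤ n)
    (hm : P.natDegree = m) (hpm : P.coeff m ≠ 0)
    (hQ : ∀ z : ℂ, biEvalZW Q z (starRingEnd ℂ z) =
      starRingEnd ℂ (biEvalZW P z (starRingEnd ℂ z)))
    (hcop : IsRelPrime P Q) :
    ({z : ℂ | biEvalZW P z (starRingEnd ℂ z) = 0}).ncard ≤ n ^ 2 + m ^ 2 := by
  classical
  by_cases h00 : n = 0 ∧ m = 0
  · obtain ⟨hn0, hm0⟩ := h00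
    have h2 : P.coeff 0 = C ((P.coeff 0).coeff 0) :=
      eq_C_of_natDegree_le_zero (by simpa [hn0] using hn 0)
    have hPC : P = C (C ((P.coeff 0).coeff 0)) :=
      (eq_C_of_natDegree_le_zero (by rw [hm, hm0])).trans (congrArg C h2)
    have hc0 : (P.coeff 0).coeff 0 ≠ 0 := by
      intro h
      rw [hm0] at hpm
      exact hpm (by rw [h2, h, map_zero])
    have hempty : {z : ℂ | biEvalZW P z (starRingEnd ℂ z) = 0} = ∅ := by
      ext z
      simp only [Set.mem_setOf_eq, Set.mem_empty_iff_false, iff_false]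
      rw [show biEvalZW P z (starRingEnd ℂ z)
        = (P.map (evalRingHom z)).eval (starRingEnd ℂ z) from rfl, hPC]
      simpa using hc0
    rw [hempty]
    simp
  · have hpos : 0 < n + m := by
      rcases Nat.eq_zero_or_pos (n+m) with h | h
      · exact absurd ⟨by omega, by omega⟩ h00
      · exact h
    obtain ⟨Q', hQ'n, hQ'c, hQ'e⟩ := reflect_spec P n m hn (le_of_eq hm)
    have hQQ' : Q = Q' := by
      have hz : ∀ z : ℂ, biEvalZW (Q - Q') z (starRingEnd ℂ z) = 0 := by
        intro z
        rw [show biEvalZW (Q - Q') z (starRingEnd ℂ z)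
          = biHom z (starRingEnd ℂ z) (Q - Q') from rfl, map_sub,
          ← biEvalZW_eq, ← biEvalZW_eq, hQ z, hQ'e z, sub_self]
      exact sub_eq_zero.mp (biEval_inj _ hz)
    subst hQQ'
    have hPne : P ≠ 0 := fun h => hpm (by simp [h])
    have hRne : (sylv P Q m n).det ≠ 0 := by
      have := sylv_det_ne_zero hPne hQ'n hcop
      rwa [hm] at this
    have hRdeg : (sylv P Q m n).det.natDegree ≤ n ^ 2 + m ^ 2 := by
      have := sylv_det_natDegree_le P Q m n n m hn hQ'c
      calc (sylv P Q m n).det.natDegree ≤ n * n + m * m := this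
        _ = n ^ 2 + m ^ 2 := by ring
    have hsub : {z : ℂ | biEvalZW P z (starRingEnd ℂ z) = 0}
        ⊆ {z : ℂ | ((sylv P Q m n).det).IsRoot z} := by
      intro z hz
      simp only [Set.mem_setOf_eq] at hz ⊢
      have hz' : biEvalZW Q z (starRingEnd ℂ z) = 0 := by rw [hQ'e z, hz, map_zero]
      have hbc : ((sylv P Q m n).det).eval z
          = (sylv (P.map (evalRingHom z)) (Q.map (evalRingHom z)) m n).det := by
        rw [show ((sylv P Q m n).det).eval z
          = (evalRingHom z) ((sylv P Q m n).det) from rfl, RingHom.map_det, RingHom.mapMatrix_apply, sylv_map]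
      show eval z _ = 0
      rw [hbc]
      exact sylv_det_eq_zero (le_trans natDegree_map_le (le_of_eq hm))
        (le_trans natDegree_map_le hQ'n) (by omega) hz hz'
    have hroots : {z : ℂ | ((sylv P Q m n).det).IsRoot z}
        = ↑((sylv P Q m n).det).roots.toFinset := by
      ext z
      simp [Multiset.mem_toFinset, mem_roots', hRne]
    calc ({z : ℂ | biEvalZW P z (starRingEnd ℂ z) = 0}).ncard
        ≤ {z : ℂ | ((sylv P Q m n).det).IsRoot z}.ncard :=
          Set.ncard_le_ncard hsub (finite_setOf_isRoot hRne)
      _ = ((sylv P Q m n).det).roots.toFinset.card := by rw [hroots, Set.ncard_coe_finset]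
      _ ≤ Multiset.card ((sylv P Q m n).det).roots := Multiset.toFinset_card_le _
      _ ≤ ((sylv P Q m n).det).natDegree := card_roots' _
      _ ≤ n ^ 2 + m ^ 2 := hRdeg
end
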